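/- For nonnegative measurable functions σ, σs on an interval with σs ≤ σ pointwise, and for any 0 ≤ t ≤ L, the integral ∫₀ᵗ exp(-∫ₛᵗ σ(r) dr) · σs(s) ds is at most 1 - exp(-∫₀ᵗ σs(r) dr), which is at most 1 - exp(-‖σs‖·L) where ‖σs‖ is an essential upper bound for σs. -/

import Mathlib

open MeasureTheory intervalIntegral Real Set

lemma key_aux (f : ℝ → ℝ) (t : ℝ) (ht : 0 ≤ t) (hmeas : Measurable f)
    (hnn : ∀ s ∈ Icc 0 t, 0 ≤ f s) (hint : IntegrableOn f (Icc 0 t)) :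
    (∫ s in (0:ℝ)..t, Real.exp (-(∫ r in s..t, f r)) * f s)
      ≤ 1 - Real.exp (-(∫ r in (0:ℝ)..t, f r)) := by
  set F : ℝ → ℝ := fun x => ∫ r in (0:ℝ)..x, f r with hFdef
  have h0mem : (0:ℝ) ∈ Icc (0:ℝ) t := ⟨le_refl _, ht⟩
  have htmem : t ∈ Icc (0:ℝ) t := ⟨ht, le_refl _⟩
  have hii : ∀ a ∈ Icc (0:ℝ) t, ∀ b ∈ Icc (0:ℝ) t, IntervalIntegrable f volume a b := by
    intro a ha b hb
    exact (hint.mono_set (uIcc_subset_Icc ha hb)).intervalIntegrable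
  have hchas : ∀ a ∈ Icc (0:ℝ) t, ∀ b ∈ Icc (0:ℝ) t, F a + ∫ r in a..b, f r = F b := by
    intro a ha b hb
    exact integral_add_adjacent_intervals (hii 0 h0mem a ha) (hii a ha b hb)
  have hFmono : ∀ a ∈ Icc (0:ℝ) t, ∀ b ∈ Icc (0:ℝ) t, a ≤ b → F a ≤ F b := by
    intro a ha b hb hab
    have h1 : (0:ℝ) ≤ ∫ r in a..b, f r := by
      apply intervalIntegral.integral_nonneg hab
      intro u hu
      exact hnn u ⟨ha.1.trans hu.1, hu.2.trans hb.2⟩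
    linarith [hchas a ha b hb]
  have hFcont : ContinuousOn F (Icc 0 t) := by
    have := intervalIntegral.continuousOn_primitive_interval (a := (0:ℝ)) (b := t)
      (μ := volume) (f := f) (by rwa [uIcc_of_le ht])
    rwa [uIcc_of_le ht] at this
  have hF0 : F 0 = 0 := by simp [hFdef]
  have hFt_nonneg : 0 ≤ F t := hF0 ▸ hFmono 0 h0mem t htmem ht
  -- rewrite the integrand
  have hcongr : (∫ s in (0:ℝ)..t, Real.exp (-(∫ r in s..t, f r)) * f s)
      = ∫ s in (0:ℝ)..t, Real.exp (-(F t - F s)) * f s := by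
    apply intervalIntegral.integral_congr
    intro s hs
    rw [uIcc_of_le ht] at hs
    have := hchas s hs t htmem
    simp only []
    congr 2
    linarith
  rw [hcongr]
  set g : ℝ → ℝ := fun s => Real.exp (-(F t - F s)) * f s with hgdef
  have hg_nonneg : ∀ s ∈ Icc (0:ℝ) t, 0 ≤ g s := fun s hs =>
    mul_nonneg (Real.exp_nonneg _) (hnn s hs)
  have hg_le : ∀ s ∈ Icc (0:ℝ) t, g s ≤ f s := by
    intro s hs
    have h1 : Real.exp (-(F t - F s)) ≤ 1 := by
      rw [← Real.exp_zero]
      apply Real.exp_le_exp.mpr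
      have := hFmono s hs t htmem hs.2
      linarith
    calc g s ≤ 1 * f s := mul_le_mul_of_nonneg_right h1 (hnn s hs)
      _ = f s := one_mul _
  have hg_meas : AEStronglyMeasurable g (volume.restrict (Icc 0 t)) := by
    have hc : ContinuousOn (fun s => Real.exp (-(F t - F s))) (Icc 0 t) :=
      Real.continuous_exp.comp_continuousOn ((continuousOn_const.sub hFcont).neg)
    exact (hc.aestronglyMeasurable measurableSet_Icc).mul
      (hmeas.aestronglyMeasurable.restrict)
  have hg_int : IntegrableOn g (Icc 0 t) := by
    apply Integrable.mono' hint hg_meas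
    filter_upwards [ae_restrict_mem measurableSet_Icc] with s hs
    rw [Real.norm_eq_abs, abs_of_nonneg (hg_nonneg s hs)]
    exact hg_le s hs
  have hgii : ∀ a ∈ Icc (0:ℝ) t, ∀ b ∈ Icc (0:ℝ) t, IntervalIntegrable g volume a b := by
    intro a ha b hb
    exact (hg_int.mono_set (uIcc_subset_Icc ha hb)).intervalIntegrable
  -- main estimate
  apply le_of_forall_pos_le_add
  intro ε hε
  set ε' := Real.log (1 + ε) with hε'def
  have hε' : 0 < ε' := Real.log_pos (by linarith)
  have hFuc := (isCompact_Icc (a := (0:ℝ)) (b := t)).uniformContinuousOn_of_continuous hFcont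
  rw [Metric.uniformContinuousOn_iff] at hFuc
  obtain ⟨δ, hδ, hδ'⟩ := hFuc ε' hε'
  obtain ⟨n₀, hn₀⟩ := exists_nat_gt (t / δ)
  set n := n₀ + 1 with hndef
  have hnpos : 0 < (n:ℝ) := by positivity
  set x : ℕ → ℝ := fun i => i * (t / n) with hxdef
  have hx0 : x 0 = 0 := by simp [hxdef]
  have hxn : x n = t := by simp only [hxdef]; field_simp
  have hxmono : ∀ i j : ℕ, i ≤ j → x i ≤ x j := by
    intro i j hij
    apply mul_le_mul_of_nonneg_right (by exact_mod_cast hij) (by positivity)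
  have hxmem : ∀ i ≤ n, x i ∈ Icc (0:ℝ) t := by
    intro i hi
    refine ⟨by positivity, ?_⟩
    calc x i ≤ x n := hxmono i n hi
      _ = t := hxn
  have hstep : t / n < δ := by
    rw [div_lt_iff₀ hnpos]
    have h1 : t / δ < n := by
      calc t / δ < n₀ := hn₀
        _ ≤ n := by exact_mod_cast Nat.le_succ n₀
    calc t = (t / δ) * δ := by field_simp
      _ < n * δ := by exact mul_lt_mul_of_pos_right h1 hδ
      _ = δ * n := mul_comm _ _
  have hΔlt : ∀ i < n, F (x (i+1)) - F (x i) < ε' := by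
    intro i hi
    have hd : dist (x (i+1)) (x i) < δ := by
      rw [Real.dist_eq]
      have : x (i+1) - x i = t / n := by
        simp only [hxdef]; push_cast; ring
      rw [this, abs_of_nonneg (by positivity)]
      exact hstep
    have := hδ' (x (i+1)) (hxmem _ (by omega)) (x i) (hxmem _ (by omega)) hd
    rw [Real.dist_eq] at this
    calc F (x (i+1)) - F (x i) ≤ |F (x (i+1)) - F (x i)| := le_abs_self _
      _ < ε' := this
  have hΔnn : ∀ i < n, 0 ≤ F (x (i+1)) - F (x i) := by
    intro i hi
    have := hFmono (x i) (hxmem _ (by omega)) (x (i+1)) (hxmem _ (by omega))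
      (hxmono i (i+1) (by omega))
    linarith
  have hsplit : (∫ s in (0:ℝ)..t, g s) = ∑ i ∈ Finset.range n, ∫ s in x i..x (i+1), g s := by
    rw [intervalIntegral.sum_integral_adjacent_intervals
      (fun k hk => hgii (x k) (hxmem _ (by omega)) (x (k+1)) (hxmem _ (by omega)))]
    rw [hx0, hxn]
  rw [hsplit]
  have hterm : ∀ i ∈ Finset.range n, (∫ s in x i..x (i+1), g s)
      ≤ Real.exp ε' * (Real.exp (F (x (i+1)) - F t) - Real.exp (F (x i) - F t)) := by
    intro i hi
    rw [Finset.mem_range] at hi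
    have hximem := hxmem i (by omega)
    have hxi1mem := hxmem (i+1) (by omega)
    have hxile : x i ≤ x (i+1) := hxmono i (i+1) (by omega)
    have h1 : (∫ s in x i..x (i+1), g s)
        ≤ ∫ s in x i..x (i+1), Real.exp (F (x (i+1)) - F t) * f s := by
      apply intervalIntegral.integral_mono_on hxile
        (hgii _ hximem _ hxi1mem)
        ((hii _ hximem _ hxi1mem).const_mul _)
      intro s hs
      have hsmem : s ∈ Icc (0:ℝ) t := ⟨hximem.1.trans hs.1, hs.2.trans hxi1mem.2⟩
      have h2 : Real.exp (-(F t - F s)) ≤ Real.exp (F (x (i+1)) - F t) := by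
        apply Real.exp_le_exp.mpr
        have := hFmono s hsmem (x (i+1)) hxi1mem hs.2
        linarith
      exact mul_le_mul_of_nonneg_right h2 (hnn s hsmem)
    rw [intervalIntegral.integral_const_mul] at h1
    have h3 : (∫ s in x i..x (i+1), f s) = F (x (i+1)) - F (x i) := by
      have := hchas (x i) hximem (x (i+1)) hxi1mem
      linarith
    rw [h3] at h1
    refine h1.trans ?_
    set Δ := F (x (i+1)) - F (x i) with hΔdef
    have hΔ0 : 0 ≤ Δ := hΔnn i hi
    have hΔε : Δ ≤ ε' := (hΔlt i hi).le
    have he1 : Real.exp (F (x (i+1)) - F t) = Real.exp (F (x i) - F t) * Real.exp Δ := by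
      rw [← Real.exp_add]; congr 1; ring
    rw [he1]
    have hA := Real.exp_pos (F (x i) - F t)
    have h4 : Δ + 1 ≤ Real.exp Δ := Real.add_one_le_exp Δ
    have h5 : Real.exp Δ ≤ Real.exp ε' := Real.exp_le_exp.mpr hΔε
    have hc : Real.exp Δ * Δ ≤ Real.exp ε' * (Real.exp Δ - 1) :=
      le_trans (mul_le_mul_of_nonneg_right h5 hΔ0)
        (mul_le_mul_of_nonneg_left (by linarith) (Real.exp_pos ε').le)
    have hd := mul_le_mul_of_nonneg_left hc hA.le
    ring_nf at hd ⊢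
    linarith
  calc (∑ i ∈ Finset.range n, ∫ s in x i..x (i+1), g s)
      ≤ ∑ i ∈ Finset.range n, Real.exp ε' * (Real.exp (F (x (i+1)) - F t)
          - Real.exp (F (x i) - F t)) := Finset.sum_le_sum hterm
    _ = Real.exp ε' * (1 - Real.exp (-(F t))) := by
        rw [← Finset.mul_sum, Finset.sum_range_sub (fun i => Real.exp (F (x i) - F t))]
        rw [hx0, hxn, hF0]
        simp only [sub_self, Real.exp_zero, zero_sub]
    _ ≤ (1 - Real.exp (-(F t))) + ε := by
        rw [hε'def, Real.exp_log (by linarith)]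
        have h6 : Real.exp (-(F t)) ≤ 1 := by
          rw [← Real.exp_zero]; exact Real.exp_le_exp.mpr (by linarith)
        nlinarith [Real.exp_pos (-(F t))]

theorem stmt0 (σ σs : ℝ → ℝ) (L M t : ℝ)
    (hσmeas : Measurable σ) (hσsmeas : Measurable σs)
    (hσs_nonneg : ∀ s ∈ Icc 0 L, 0 ≤ σs s)
    (hle : ∀ s ∈ Icc 0 L, σs s ≤ σ s)
    (hM : ∀ s ∈ Icc 0 L, σs s ≤ M)
    (hσint : IntegrableOn σ (Icc 0 L))
    (ht0 : 0 ≤ t) (htL : t ≤ L) :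
    (∫ s in (0:ℝ)..t, Real.exp (-(∫ r in s..t, σ r)) * σs s)
        ≤ 1 - Real.exp (-(∫ r in (0:ℝ)..t, σs r)) ∧
    1 - Real.exp (-(∫ r in (0:ℝ)..t, σs r)) ≤ 1 - Real.exp (-(M * L)) := by
  have h0L : (0:ℝ) ≤ L := ht0.trans htL
  have hIccsub : Icc (0:ℝ) t ⊆ Icc 0 L := Icc_subset_Icc le_rfl htL
  have hσsint : IntegrableOn σs (Icc 0 L) := by
    apply Integrable.mono' hσint hσsmeas.aestronglyMeasurable.restrict
    filter_upwards [ae_restrict_mem measurableSet_Icc] with s hs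
    rw [Real.norm_eq_abs, abs_of_nonneg (hσs_nonneg s hs)]
    exact hle s hs
  have hσsint' : IntegrableOn σs (Icc 0 t) := hσsint.mono_set hIccsub
  have hσint' : IntegrableOn σ (Icc 0 t) := hσint.mono_set hIccsub
  have hσsii : ∀ a ∈ Icc (0:ℝ) t, ∀ b ∈ Icc (0:ℝ) t, IntervalIntegrable σs volume a b :=
    fun a ha b hb => (hσsint'.mono_set (uIcc_subset_Icc ha hb)).intervalIntegrable
  have hσii : ∀ a ∈ Icc (0:ℝ) t, ∀ b ∈ Icc (0:ℝ) t, IntervalIntegrable σ volume a b :=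
    fun a ha b hb => (hσint'.mono_set (uIcc_subset_Icc ha hb)).intervalIntegrable
  have htmem : t ∈ Icc (0:ℝ) t := ⟨ht0, le_refl _⟩
  constructor
  · -- first inequality
    have hstep1 : (∫ s in (0:ℝ)..t, Real.exp (-(∫ r in s..t, σ r)) * σs s)
        ≤ ∫ s in (0:ℝ)..t, Real.exp (-(∫ r in s..t, σs r)) * σs s := by
      -- integrability of both integrands via continuity of primitives
      have hcont1 : ContinuousOn (fun s => ∫ r in (0:ℝ)..s, σ r) (Icc 0 t) := by
        have := intervalIntegral.continuousOn_primitive_interval (a := (0:ℝ)) (b := t)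
          (μ := volume) (f := σ) (by rwa [uIcc_of_le ht0])
        rwa [uIcc_of_le ht0] at this
      have hcont2 : ContinuousOn (fun s => ∫ r in (0:ℝ)..s, σs r) (Icc 0 t) := by
        have := intervalIntegral.continuousOn_primitive_interval (a := (0:ℝ)) (b := t)
          (μ := volume) (f := σs) (by rwa [uIcc_of_le ht0])
        rwa [uIcc_of_le ht0] at this
      have hchas1 : ∀ s ∈ Icc (0:ℝ) t, (∫ r in (0:ℝ)..s, σ r) + ∫ r in s..t, σ r
          = ∫ r in (0:ℝ)..t, σ r := fun s hs =>
        integral_add_adjacent_intervals (hσii 0 ⟨le_rfl, ht0⟩ s hs) (hσii s hs t htmem)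
      have hchas2 : ∀ s ∈ Icc (0:ℝ) t, (∫ r in (0:ℝ)..s, σs r) + ∫ r in s..t, σs r
          = ∫ r in (0:ℝ)..t, σs r := fun s hs =>
        integral_add_adjacent_intervals (hσsii 0 ⟨le_rfl, ht0⟩ s hs) (hσsii s hs t htmem)
      have hmono_in : ∀ s ∈ Icc (0:ℝ) t,
          (∫ r in s..t, σs r) ≤ ∫ r in s..t, σ r := by
        intro s hs
        apply intervalIntegral.integral_mono_on hs.2 (hσsii s hs t htmem) (hσii s hs t htmem)
        intro r hr
        exact hle r ⟨hs.1.trans hr.1, hr.2.trans htL⟩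
      have hnn_in : ∀ s ∈ Icc (0:ℝ) t, (0:ℝ) ≤ ∫ r in s..t, σs r := by
        intro s hs
        apply intervalIntegral.integral_nonneg hs.2
        intro r hr
        exact hσs_nonneg r ⟨hs.1.trans hr.1, hr.2.trans htL⟩
      have hint1 : IntegrableOn (fun s => Real.exp (-(∫ r in s..t, σ r)) * σs s) (Icc 0 t) := by
        apply Integrable.mono' hσsint'
        · have hc : ContinuousOn (fun s => Real.exp (-((∫ r in (0:ℝ)..t, σ r)
              - ∫ r in (0:ℝ)..s, σ r))) (Icc 0 t) :=
            Real.continuous_exp.comp_continuousOn ((continuousOn_const.sub hcont1).neg)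
          apply AEStronglyMeasurable.congr
            ((hc.aestronglyMeasurable measurableSet_Icc).mul
              hσsmeas.aestronglyMeasurable.restrict)
          filter_upwards [ae_restrict_mem measurableSet_Icc] with s hs
          have := hchas1 s hs
          simp only [Pi.mul_apply]
          congr 2
          linarith
        · filter_upwards [ae_restrict_mem measurableSet_Icc] with s hs
          rw [Real.norm_eq_abs, abs_mul, Real.abs_exp,
            abs_of_nonneg (hσs_nonneg s (hIccsub hs))]
          have h1 : Real.exp (-(∫ r in s..t, σ r)) ≤ 1 := by
            rw [← Real.exp_zero]
            apply Real.exp_le_exp.mpr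
            have := (hnn_in s hs).trans (hmono_in s hs)
            linarith
          calc Real.exp (-(∫ r in s..t, σ r)) * σs s ≤ 1 * σs s :=
              mul_le_mul_of_nonneg_right h1 (hσs_nonneg s (hIccsub hs))
            _ = σs s := one_mul _
      have hint2 : IntegrableOn (fun s => Real.exp (-(∫ r in s..t, σs r)) * σs s) (Icc 0 t) := by
        apply Integrable.mono' hσsint'
        · have hc : ContinuousOn (fun s => Real.exp (-((∫ r in (0:ℝ)..t, σs r)
              - ∫ r in (0:ℝ)..s, σs r))) (Icc 0 t) :=
            Real.continuous_exp.comp_continuousOn ((continuousOn_const.sub hcont2).neg)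
          apply AEStronglyMeasurable.congr
            ((hc.aestronglyMeasurable measurableSet_Icc).mul
              hσsmeas.aestronglyMeasurable.restrict)
          filter_upwards [ae_restrict_mem measurableSet_Icc] with s hs
          have := hchas2 s hs
          simp only [Pi.mul_apply]
          congr 2
          linarith
        · filter_upwards [ae_restrict_mem measurableSet_Icc] with s hs
          rw [Real.norm_eq_abs, abs_mul, Real.abs_exp,
            abs_of_nonneg (hσs_nonneg s (hIccsub hs))]
          have h1 : Real.exp (-(∫ r in s..t, σs r)) ≤ 1 := by
            rw [← Real.exp_zero]
            apply Real.exp_le_exp.mpr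
            have := hnn_in s hs
            linarith
          calc Real.exp (-(∫ r in s..t, σs r)) * σs s ≤ 1 * σs s :=
              mul_le_mul_of_nonneg_right h1 (hσs_nonneg s (hIccsub hs))
            _ = σs s := one_mul _
      apply intervalIntegral.integral_mono_on ht0
        ((hint1.mono_set (by rw [uIcc_of_le ht0])).intervalIntegrable)
        ((hint2.mono_set (by rw [uIcc_of_le ht0])).intervalIntegrable)
      intro s hs
      have h2 : Real.exp (-(∫ r in s..t, σ r)) ≤ Real.exp (-(∫ r in s..t, σs r)) := by
        apply Real.exp_le_exp.mpr
        have := hmono_in s hs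
        linarith
      exact mul_le_mul_of_nonneg_right h2 (hσs_nonneg s (hIccsub hs))
    refine hstep1.trans ?_
    exact key_aux σs t ht0 hσsmeas (fun s hs => hσs_nonneg s (hIccsub hs)) hσsint'
  · -- second inequality
    have hM0 : 0 ≤ M := (hσs_nonneg 0 ⟨le_rfl, h0L⟩).trans (hM 0 ⟨le_rfl, h0L⟩)
    have h1 : (∫ r in (0:ℝ)..t, σs r) ≤ M * L := by
      have h2 : (∫ r in (0:ℝ)..t, σs r) ≤ ∫ r in (0:ℝ)..t, M := by
        apply intervalIntegral.integral_mono_on ht0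
          ((hσsint'.mono_set (by rw [uIcc_of_le ht0])).intervalIntegrable)
          intervalIntegrable_const
        intro r hr
        exact hM r ⟨hr.1, hr.2.trans htL⟩
      rw [intervalIntegral.integral_const, smul_eq_mul, sub_zero] at h2
      calc (∫ r in (0:ℝ)..t, σs r) ≤ t * M := h2
        _ ≤ L * M := mul_le_mul_of_nonneg_right htL hM0
        _ = M * L := mul_comm _ _
    have := Real.exp_le_exp.mpr (neg_le_neg h1)
    linarith
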